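/- The function P ↦ C(P)/(P/α + β), where C(P) = log₂(1 + cP) with c > 0, α > 0, β > 0, attains a maximum at a unique P* > 0 and is strictly increasing on (0, P*) and strictly decreasing on (P*, ∞); moreover C(P)/(P/α+β) → 0 as P → ∞. -/

import Mathlib

open Real Set Filter

/-- Secrecy energy efficiency as a function of transmit power. -/
noncomputable def EEfun (c α β : ℝ) : ℝ → ℝ :=
  fun P => Real.logb 2 (1 + c * P) / (P / α + β)

/-- Auxiliary function governing the sign of the derivative of `EEfun`. -/
noncomputable def EEaux (c α β : ℝ) : ℝ → ℝ :=
  fun P => c * (P / α + β) / (1 + c * P) - Real.log (1 + c * P) / α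

lemma EEaux_hasDerivAt (c α β : ℝ) (hc : 0 < c) (hα : 0 < α) (x : ℝ)
    (hx : 0 < 1 + c * x) :
    HasDerivAt (EEaux c α β) (-(c ^ 2 * (x / α + β)) / (1 + c * x) ^ 2) x := by
  have h1 : HasDerivAt (fun P : ℝ => 1 + c * P) c x := by
    simpa using ((hasDerivAt_id x).const_mul c).const_add 1
  have h2 : HasDerivAt (fun P : ℝ => c * (P / α + β)) (c * (1 / α)) x := by
    exact (((hasDerivAt_id x).div_const α).add_const β).const_mul c
  have h3 : HasDerivAt (fun P : ℝ => c * (P / α + β) / (1 + c * P))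
      ((c * (1 / α) * (1 + c * x) - c * (x / α + β) * c) / (1 + c * x) ^ 2) x :=
    h2.div h1 (ne_of_gt hx)
  have h4 : HasDerivAt (fun P : ℝ => Real.log (1 + c * P) / α)
      (c / (1 + c * x) / α) x := (h1.log (ne_of_gt hx)).div_const α
  have := h3.sub h4
  refine HasDerivAt.congr_deriv this (Eq.symm ?_)
  have hx' : (1 + c * x) ≠ 0 := ne_of_gt hx
  have hα' : α ≠ 0 := ne_of_gt hα
  field_simp
  ring

lemma EEfun_hasDerivAt (c α β : ℝ) (hc : 0 < c) (hα : 0 < α) (hβ : 0 < β) (x : ℝ)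
    (hx : 0 < 1 + c * x) (hD : 0 < x / α + β) :
    HasDerivAt (EEfun c α β)
      (EEaux c α β x / (Real.log 2 * (x / α + β) ^ 2)) x := by
  have hL2 : (0:ℝ) < Real.log 2 := Real.log_pos (by norm_num)
  have h1 : HasDerivAt (fun P : ℝ => 1 + c * P) c x := by
    simpa using ((hasDerivAt_id x).const_mul c).const_add 1
  have h2 : HasDerivAt (fun P : ℝ => Real.log (1 + c * P) / Real.log 2)
      (c / (1 + c * x) / Real.log 2) x := (h1.log (ne_of_gt hx)).div_const _
  have h3 : HasDerivAt (fun P : ℝ => P / α + β) (1 / α) x :=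
    ((hasDerivAt_id x).div_const α).add_const β
  have h4 := h2.div h3 (ne_of_gt hD)
  have hEq : EEfun c α β = fun P => Real.log (1 + c * P) / Real.log 2 / (P / α + β) := by
    funext P; simp [EEfun, Real.logb]
  rw [hEq]
  refine HasDerivAt.congr_deriv h4 (Eq.symm ?_)
  have hL2' : Real.log 2 ≠ 0 := ne_of_gt hL2
  have hx' : (1 + c * x) ≠ 0 := ne_of_gt hx
  have hD' : (x / α + β) ≠ 0 := ne_of_gt hD
  have hα' : α ≠ 0 := ne_of_gt hα
  rw [div_eq_div_iff (by positivity) (pow_ne_zero 2 hD')]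
  unfold EEaux
  field_simp

theorem see_unimodal (c α β : ℝ) (hc : 0 < c) (hα : 0 < α) (hβ : 0 < β) :
    (∃ Pstar : ℝ, 0 < Pstar ∧
      IsMaxOn (EEfun c α β) (Set.Ioi 0) Pstar ∧
      StrictMonoOn (EEfun c α β) (Set.Ioo 0 Pstar) ∧
      StrictAntiOn (EEfun c α β) (Set.Ioi Pstar) ∧
      ∀ Q, 0 < Q → IsMaxOn (EEfun c α β) (Set.Ioi 0) Q → Q = Pstar) ∧
    Filter.Tendsto (EEfun c α β) Filter.atTop (nhds 0) := by
  have hL2 : (0:ℝ) < Real.log 2 := Real.log_pos (by norm_num)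
  set g := EEaux c α β with hg
  set f := EEfun c α β with hf
  -- basic positivity facts
  have hxpos : ∀ x : ℝ, 0 ≤ x → 0 < 1 + c * x := fun x hx => by nlinarith
  have hDpos : ∀ x : ℝ, 0 ≤ x → 0 < x / α + β := fun x hx => by
    have := div_nonneg hx hα.le; linarith
  -- g is strictly antitone on [0, ∞)
  have hgcont : ContinuousOn g (Set.Ici 0) := fun x hx =>
    (EEaux_hasDerivAt c α β hc hα x (hxpos x hx)).continuousAt.continuousWithinAt
  have hganti : StrictAntiOn g (Set.Ici 0) := by
    apply strictAntiOn_of_deriv_neg (convex_Ici 0) hgcont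
    intro x hx
    rw [interior_Ici] at hx
    rw [(EEaux_hasDerivAt c α β hc hα x (hxpos x (le_of_lt hx))).deriv]
    have h1 : 0 < c ^ 2 * (x / α + β) := by
      have := hDpos x hx.le; positivity
    have h2 : (0:ℝ) < (1 + c * x) ^ 2 := by
      have := hxpos x hx.le; positivity
    exact div_neg_of_neg_of_pos (neg_neg_of_pos h1) h2
  -- g 0 = c * β > 0
  have hg0 : g 0 = c * β := by simp [hg, EEaux]
  -- find P₀ with g P₀ < 0
  obtain ⟨P₀, hP₀1, hP₀neg⟩ : ∃ P₀ : ℝ, 1 ≤ P₀ ∧ g P₀ < 0 := by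
    have htop : Tendsto (fun P : ℝ => Real.log (1 + c * P)) atTop atTop := by
      apply Real.tendsto_log_atTop.comp
      apply tendsto_atTop_add_const_left
      exact (tendsto_id.const_mul_atTop hc)
    have hev : ∀ᶠ P in atTop, 1 + α * β < Real.log (1 + c * P) :=
      htop.eventually_gt_atTop _
    obtain ⟨P₀, hP₀⟩ := (hev.and (eventually_ge_atTop (1:ℝ))).exists
    refine ⟨P₀, hP₀.2, ?_⟩
    have hP₀pos : (0:ℝ) < P₀ := lt_of_lt_of_le one_pos hP₀.2
    have hbound : c * (P₀ / α + β) / (1 + c * P₀) ≤ 1 / α + β := by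
      have h1 : c * (P₀ / α + β) / (1 + c * P₀) ≤ c * (P₀ / α + β) / (c * P₀) := by
        apply div_le_div_of_nonneg_left (by positivity) (by positivity)
        linarith
      have h2 : c * (P₀ / α + β) / (c * P₀) = 1 / α + β / P₀ := by
        field_simp
      have h3 : β / P₀ ≤ β := by
        rw [div_le_iff₀ hP₀pos]
        nlinarith
      rw [h2] at h1
      linarith
    have hlog : 1 / α + β < Real.log (1 + c * P₀) / α := by
      rw [lt_div_iff₀ hα]
      have hEq : (1 / α + β) * α = 1 + α * β := by field_simp
      rw [hEq]; exact hP₀.1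
    simp only [hg, EEaux]
    linarith
  have hP₀pos : (0:ℝ) < P₀ := lt_of_lt_of_le one_pos hP₀1
  -- intermediate value: get Pstar with g Pstar = 0
  obtain ⟨Pstar, hPstar_mem, hPstar0⟩ : ∃ Pstar ∈ Set.Ioo (0:ℝ) P₀, g Pstar = 0 := by
    have hcont : ContinuousOn g (Set.Icc 0 P₀) :=
      hgcont.mono (Set.Icc_subset_Ici_self)
    have h0 : (0:ℝ) ∈ Set.Ioo (g P₀) (g 0) := by
      constructor
      · exact hP₀neg
      · rw [hg0]; positivity
    have := intermediate_value_Ioo' (le_of_lt hP₀pos) hcont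
    obtain ⟨Pstar, hmem, heq⟩ := this h0
    exact ⟨Pstar, hmem, heq⟩
  obtain ⟨hPstar_pos, hPstar_lt⟩ := hPstar_mem
  -- sign of g
  have hgsign_pos : ∀ x : ℝ, 0 ≤ x → x < Pstar → 0 < g x := by
    intro x hx hlt
    have := hganti hx hPstar_pos.le hlt
    rwa [hPstar0] at this
  have hgsign_neg : ∀ x : ℝ, Pstar < x → g x < 0 := by
    intro x hlt
    have := hganti (le_of_lt hPstar_pos) (le_of_lt (lt_trans hPstar_pos hlt)) hlt
    rwa [hPstar0] at this
  -- f continuous where needed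
  have hfderiv : ∀ x : ℝ, 0 ≤ x →
      HasDerivAt f (g x / (Real.log 2 * (x / α + β) ^ 2)) x := fun x hx =>
    EEfun_hasDerivAt c α β hc hα hβ x (hxpos x hx) (hDpos x hx)
  have hfcont : ContinuousOn f (Set.Ici 0) := fun x hx =>
    (hfderiv x hx).continuousAt.continuousWithinAt
  -- strict mono on [0, Pstar]
  have hmono : StrictMonoOn f (Set.Icc 0 Pstar) := by
    apply strictMonoOn_of_deriv_pos (convex_Icc 0 Pstar)
      (hfcont.mono Set.Icc_subset_Ici_self)
    intro x hx
    rw [interior_Icc] at hx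
    rw [(hfderiv x (le_of_lt hx.1)).deriv]
    have h1 := hgsign_pos x (le_of_lt hx.1) hx.2
    have h2 : 0 < Real.log 2 * (x / α + β) ^ 2 := by
      have := hDpos x (le_of_lt hx.1); positivity
    positivity
  -- strict anti on [Pstar, ∞)
  have hanti : StrictAntiOn f (Set.Ici Pstar) := by
    apply strictAntiOn_of_deriv_neg (convex_Ici Pstar)
      (hfcont.mono (Set.Ici_subset_Ici.mpr (le_of_lt hPstar_pos)))
    intro x hx
    rw [interior_Ici] at hx
    have hx0 : (0:ℝ) ≤ x := le_of_lt (lt_trans hPstar_pos hx)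
    rw [(hfderiv x hx0).deriv]
    have h1 := hgsign_neg x hx
    have h2 : 0 < Real.log 2 * (x / α + β) ^ 2 := by
      have := hDpos x hx0; positivity
    exact div_neg_of_neg_of_pos h1 h2
  -- maximality
  have hmax : IsMaxOn f (Set.Ioi 0) Pstar := by
    rw [isMaxOn_iff]
    intro x hx
    rcases lt_trichotomy x Pstar with h | h | h
    · exact le_of_lt (hmono ⟨le_of_lt hx, le_of_lt h⟩
        ⟨le_of_lt hPstar_pos, le_refl _⟩ h)
    · rw [h]
    · exact le_of_lt (hanti (Set.self_mem_Ici) (le_of_lt h) h)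
  constructor
  · refine ⟨Pstar, hPstar_pos, hmax, ?_, ?_, ?_⟩
    · exact hmono.mono (fun x hx => ⟨le_of_lt hx.1, le_of_lt hx.2⟩)
    · exact hanti.mono Set.Ioi_subset_Ici_self
    · intro Q hQ hQmax
      by_contra hne
      rcases lt_or_gt_of_ne hne with h | h
      · have h1 : f Q < f Pstar :=
          hmono ⟨le_of_lt hQ, le_of_lt h⟩ ⟨le_of_lt hPstar_pos, le_refl _⟩ h
        have h2 : f Pstar ≤ f Q := hQmax (Set.mem_Ioi.mpr hPstar_pos)
        linarith
      · have h1 : f Q < f Pstar := hanti Set.self_mem_Ici (le_of_lt h) h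
        have h2 : f Pstar ≤ f Q := hQmax (Set.mem_Ioi.mpr hPstar_pos)
        linarith
  · -- tendsto 0
    have hca : (1 : ℝ) / (c * α) ≠ 0 := by positivity
    have h1 : Tendsto (fun y : ℝ => Real.log y ^ 1 / (1 / (c * α) * y + (β - 1 / (c * α))))
        atTop (nhds 0) := Real.tendsto_pow_log_div_mul_add_atTop _ _ 1 hca
    have h2 : Tendsto (fun P : ℝ => 1 + c * P) atTop atTop := by
      apply tendsto_atTop_add_const_left
      exact tendsto_id.const_mul_atTop hc
    have h3 := (h1.comp h2).div_const (Real.log 2)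
    rw [zero_div] at h3
    apply h3.congr'
    filter_upwards [eventually_ge_atTop (0:ℝ)] with P hP
    have hD := hDpos P hP
    have hx := hxpos P hP
    simp only [Function.comp, pow_one, hf, EEfun, Real.logb]
    rw [div_div, div_div]
    congr 1
    field_simp
    ring
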